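/- Let d ≥ 1, R ≥ 1, and let ψ, φ : [1,∞) → (0,∞) be decreasing functions with φ(T) ≤ ψ(T) for all T ≥ 1 and ψ(T) → 0 as T → ∞. Let B ⊂ A be affine subspaces of ℝ^d with 0 ≤ b = dim B < a = dim A ≤ d, and assume B is ψ-badly approximable. For a real T ≥ 1 define Π_T = {z ∈ ℝ^{d+1} : 0 ≤ z_0 ≤ T, max_{1≤j≤d}|z_j| ≤ RT, dist_∞(z,𝔄) ≤ φ(RT)}. Then there exists a constant C > 0, depending only on d, A, B and R, such that for every T ≥ 1 the number of integer points in Π_T satisfies #(Π_T ∩ ℤ^{d+1}) ≤ C·(T/ψ(RT))^{a−b}. -/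

import Mathlib

/-- The lift `w ↦ (1, w)` from `ℝ^d` to `ℝ^{d+1}`. -/
noncomputable def lift1 {d : ℕ} (w : Fin d → ℝ) : Fin (d+1) → ℝ := Fin.cons 1 w

/-- The linear span of `{(1,w) : w ∈ B}` for an affine subspace `B ⊆ ℝ^d`. -/
noncomputable def spanLift {d : ℕ} (B : AffineSubspace ℝ (Fin d → ℝ)) :
    Submodule ℝ (Fin (d+1) → ℝ) :=
  Submodule.span ℝ (lift1 '' (B : Set (Fin d → ℝ)))

/-- The set `Π_T`. -/
noncomputable def PiSet {d : ℕ} (A : AffineSubspace ℝ (Fin d → ℝ))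
    (φ : ℝ → ℝ) (R T : ℝ) : Set (Fin (d+1) → ℝ) :=
  {z | 0 ≤ z 0 ∧ z 0 ≤ T ∧ (∀ j : Fin d, |z j.succ| ≤ R * T) ∧
    Metric.infDist z (spanLift A : Set (Fin (d+1) → ℝ)) ≤ φ (R * T)}

lemma abs_sub_lt_of_floor_eq {s t ε : ℝ} (hε : 0 < ε) (h : ⌊s / ε⌋ = ⌊t / ε⌋) :
    |s - t| < ε := by
  have h1 : s / ε - t / ε < 1 := by
    have ha := Int.lt_floor_add_one (s / ε)
    have hb := Int.floor_le (t / ε)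
    rw [h] at ha
    linarith
  have h2 : t / ε - s / ε < 1 := by
    have ha := Int.lt_floor_add_one (t / ε)
    have hb := Int.floor_le (s / ε)
    rw [h] at hb
    linarith
  rw [div_sub_div_same] at h1 h2
  have h1' := (div_lt_one hε).mp h1
  have h2' := (div_lt_one hε).mp h2
  rw [abs_sub_lt_iff]
  exact ⟨h1', h2'⟩


open Module Submodule

/-- prepend `0` as a linear map -/
noncomputable def consZero (d : ℕ) : (Fin d → ℝ) →ₗ[ℝ] (Fin (d+1) → ℝ) where
  toFun v := Fin.cons 0 v
  map_add' v w := by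
    ext i
    refine Fin.cases ?_ (fun j => ?_) i <;> simp
  map_smul' c v := by
    ext i
    refine Fin.cases ?_ (fun j => ?_) i <;> simp

lemma lift1_eq_add {d : ℕ} (w p : Fin d → ℝ) :
    lift1 w = lift1 p + consZero d (w - p) := by
  ext i
  refine Fin.cases ?_ (fun j => ?_) i <;>
    simp [lift1, consZero] <;> ring

lemma consZero_eq_sub {d : ℕ} (v p : Fin d → ℝ) :
    consZero d v = lift1 (v + p) - lift1 p := by
  ext i
  refine Fin.cases ?_ (fun j => ?_) i <;>
    simp [lift1, consZero] <;> ring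

lemma spanLift_eq {d : ℕ} (B : AffineSubspace ℝ (Fin d → ℝ)) {p : Fin d → ℝ} (hp : p ∈ B) :
    spanLift B = (Submodule.span ℝ {lift1 p}) ⊔ (B.direction.map (consZero d)) := by
  apply le_antisymm
  · rw [spanLift, Submodule.span_le]
    rintro _ ⟨w, hw, rfl⟩
    rw [lift1_eq_add w p]
    refine Submodule.add_mem _ ?_ ?_
    · exact Submodule.mem_sup_left (Submodule.mem_span_singleton_self _)
    · refine Submodule.mem_sup_right (Submodule.mem_map_of_mem ?_)
      have := AffineSubspace.vsub_mem_direction hw hp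
      simpa using this
  · refine sup_le ?_ ?_
    · rw [Submodule.span_le, Set.singleton_subset_iff]
      exact Submodule.subset_span ⟨p, hp, rfl⟩
    · rintro _ ⟨v, hv, rfl⟩
      rw [consZero_eq_sub v p]
      refine Submodule.sub_mem _ ?_ (Submodule.subset_span ⟨p, hp, rfl⟩)
      refine Submodule.subset_span ⟨v + p, ?_, rfl⟩
      have := AffineSubspace.vadd_mem_of_mem_direction hv hp
      simpa using this

lemma consZero_injective (d : ℕ) : Function.Injective (consZero d) := by
  intro v w h
  ext j
  have := congrFun h j.succ
  simpa [consZero] using this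

lemma lift1_ne_zero {d : ℕ} (p : Fin d → ℝ) : lift1 p ≠ 0 := by
  intro h
  have := congrFun h 0
  simp [lift1] at this

lemma finrank_spanLift {d bn : ℕ} (B : AffineSubspace ℝ (Fin d → ℝ)) {p : Fin d → ℝ}
    (hp : p ∈ B) (hb : finrank ℝ B.direction = bn) :
    finrank ℝ (spanLift B) = bn + 1 := by
  rw [spanLift_eq B hp]
  have hdisj : (Submodule.span ℝ {lift1 p}) ⊓ (B.direction.map (consZero d)) = ⊥ := by
    rw [eq_bot_iff]
    rintro x ⟨hx1, hx2⟩
    obtain ⟨c, rfl⟩ := Submodule.mem_span_singleton.mp hx1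
    obtain ⟨v, hv, hveq⟩ := hx2
    have h0 : consZero d v 0 = c * 1 := by
      rw [hveq]; simp [lift1]
    simp [consZero] at h0
    rw [← h0]
    simp
  have := Submodule.finrank_sup_add_finrank_inf_eq (Submodule.span ℝ {lift1 p})
    (B.direction.map (consZero d))
  rw [hdisj] at this
  simp [finrank_bot] at this
  rw [this, finrank_span_singleton (lift1_ne_zero p)]
  have : finrank ℝ (B.direction.map (consZero d)) = bn := by
    rw [← LinearEquiv.finrank_eq
      (Submodule.equivMapOfInjective (consZero d) (consZero_injective d) B.direction)]
    exact hb
  rw [this]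
  ring



set_option maxHeartbeats 1000000 in
set_option synthInstance.maxHeartbeats 400000 in
lemma exists_functionals (n : ℕ) (𝔅 𝔄 : Submodule ℝ (Fin n → ℝ)) (h𝔅𝔄 : 𝔅 ≤ 𝔄) :
    ∃ (k l : ℕ) (ω : Fin k → ((Fin n → ℝ) →ₗ[ℝ] ℝ)) (ν : Fin l → ((Fin n → ℝ) →ₗ[ℝ] ℝ))
      (Lω Lν C₁ : ℝ),
      k + Module.finrank ℝ 𝔅 = Module.finrank ℝ 𝔄 ∧
      0 < Lω ∧ 0 < Lν ∧ 0 < C₁ ∧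
      (∀ i x, |ω i x| ≤ Lω * ‖x‖) ∧
      (∀ j x, |ν j x| ≤ Lν * Metric.infDist x (𝔄 : Set (Fin n → ℝ))) ∧
      (∀ z, Metric.infDist z (𝔅 : Set (Fin n → ℝ)) ≤
        C₁ * ((∑ i, |ω i z|) + (∑ j, |ν j z|))) := by
  classical
  obtain ⟨V, hV⟩ := Submodule.exists_isCompl 𝔄
  obtain ⟨W', hW'⟩ := Submodule.exists_isCompl (𝔅.comap 𝔄.subtype)
  let W : Submodule ℝ (Fin n → ℝ) := W'.map 𝔄.subtype
  let P1 : (Fin n → ℝ) →ₗ[ℝ] 𝔄 := 𝔄.linearProjOfIsCompl V hV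
  let P2 : 𝔄 →ₗ[ℝ] (𝔅.comap 𝔄.subtype) := (𝔅.comap 𝔄.subtype).linearProjOfIsCompl W' hW'
  let bmap : (Fin n → ℝ) →ₗ[ℝ] (Fin n → ℝ) :=
    𝔄.subtype ∘ₗ (𝔅.comap 𝔄.subtype).subtype ∘ₗ P2 ∘ₗ P1
  let wmap : (Fin n → ℝ) →ₗ[ℝ] (Fin n → ℝ) := (𝔄.subtype ∘ₗ P1) - bmap
  let vmap : (Fin n → ℝ) →ₗ[ℝ] (Fin n → ℝ) := LinearMap.id - (𝔄.subtype ∘ₗ P1)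
  have hbmem : ∀ x, bmap x ∈ 𝔅 := fun x => (P2 (P1 x)).2
  have hvmem : ∀ x, vmap x ∈ V := by
    intro x
    have hker : LinearMap.ker P1 = V := Submodule.linearProjOfIsCompl_ker hV
    rw [← hker, LinearMap.mem_ker]
    have h1 : P1 ((𝔄.subtype (P1 x))) = P1 x :=
      Submodule.linearProjOfIsCompl_apply_left hV (P1 x)
    show P1 (x - 𝔄.subtype (P1 x)) = 0
    rw [map_sub, h1, sub_self]
  have hwmem : ∀ x, wmap x ∈ W := by
    intro x
    have hker : LinearMap.ker P2 = W' := Submodule.linearProjOfIsCompl_ker hW'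
    have hmem' : P1 x - (𝔅.comap 𝔄.subtype).subtype (P2 (P1 x)) ∈ W' := by
      rw [← hker, LinearMap.mem_ker, map_sub]
      have h2 : P2 ((𝔅.comap 𝔄.subtype).subtype (P2 (P1 x))) = P2 (P1 x) :=
        Submodule.linearProjOfIsCompl_apply_left hW' (P2 (P1 x))
      rw [h2, sub_self]
    exact ⟨P1 x - (𝔅.comap 𝔄.subtype).subtype (P2 (P1 x)), hmem', by simp [wmap, bmap]⟩
  have hv0 : ∀ y ∈ 𝔄, vmap y = 0 := by
    intro y hy
    have h1 : P1 (𝔄.subtype ⟨y, hy⟩) = ⟨y, hy⟩ :=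
      Submodule.linearProjOfIsCompl_apply_left hV ⟨y, hy⟩
    show y - 𝔄.subtype (P1 y) = 0
    have : P1 y = ⟨y, hy⟩ := h1
    rw [this]
    simp
  have hdecomp : ∀ x, x - bmap x = wmap x + vmap x := by
    intro x
    show x - bmap x = ((𝔄.subtype (P1 x)) - bmap x) + (x - (𝔄.subtype (P1 x)))
    abel
  -- dimension of W
  have hkW : Module.finrank ℝ W + Module.finrank ℝ 𝔅 = Module.finrank ℝ 𝔄 := by
    have h1 : Module.finrank ℝ (𝔅.comap 𝔄.subtype) = Module.finrank ℝ 𝔅 :=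
      LinearEquiv.finrank_eq (Submodule.comapSubtypeEquivOfLe h𝔅𝔄)
    have h2 : Module.finrank ℝ (𝔅.comap 𝔄.subtype) + Module.finrank ℝ W'
        = Module.finrank ℝ 𝔄 := Submodule.finrank_add_eq_of_isCompl hW'
    have h3 : Module.finrank ℝ W = Module.finrank ℝ W' :=
      Submodule.finrank_map_subtype_eq 𝔄 W'
    omega
  -- bases
  let cW := Module.finBasis ℝ W
  let cV := Module.finBasis ℝ V
  let Wv : (Fin n → ℝ) →ₗ[ℝ] W := LinearMap.codRestrict W wmap hwmem
  let Vv : (Fin n → ℝ) →ₗ[ℝ] V := LinearMap.codRestrict V vmap hvmem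
  let ω : Fin (Module.finrank ℝ W) → ((Fin n → ℝ) →ₗ[ℝ] ℝ) := fun i => (cW.coord i) ∘ₗ Wv
  let ν : Fin (Module.finrank ℝ V) → ((Fin n → ℝ) →ₗ[ℝ] ℝ) := fun j => (cV.coord j) ∘ₗ Vv
  let Lω : ℝ := (∑ i, ‖LinearMap.toContinuousLinearMap (ω i)‖) + 1
  let Lν : ℝ := (∑ j, ‖LinearMap.toContinuousLinearMap (ν j)‖) + 1
  have hLωpos : 0 < Lω := by
    have : (0:ℝ) ≤ ∑ i, ‖LinearMap.toContinuousLinearMap (ω i)‖ :=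
      Finset.sum_nonneg fun i _ => norm_nonneg _
    have h : Lω = (∑ i, ‖LinearMap.toContinuousLinearMap (ω i)‖) + 1 := rfl
    linarith [h ▸ (by linarith : (0:ℝ) < (∑ i, ‖LinearMap.toContinuousLinearMap (ω i)‖) + 1)]
  have hLνpos : 0 < Lν := by
    have : (0:ℝ) ≤ ∑ j, ‖LinearMap.toContinuousLinearMap (ν j)‖ :=
      Finset.sum_nonneg fun j _ => norm_nonneg _
    show (0:ℝ) < (∑ j, ‖LinearMap.toContinuousLinearMap (ν j)‖) + 1
    linarith
  have hLω : ∀ i x, |ω i x| ≤ Lω * ‖x‖ := by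
    intro i x
    have h1 : |ω i x| ≤ ‖LinearMap.toContinuousLinearMap (ω i)‖ * ‖x‖ := by
      have := (LinearMap.toContinuousLinearMap (ω i)).le_opNorm x
      simpa [Real.norm_eq_abs] using this
    have h2 : ‖LinearMap.toContinuousLinearMap (ω i)‖ ≤ Lω := by
      have := Finset.single_le_sum
        (f := fun i => ‖LinearMap.toContinuousLinearMap (ω i)‖)
        (fun j _ => norm_nonneg _) (Finset.mem_univ i)
      show _ ≤ (∑ i, ‖LinearMap.toContinuousLinearMap (ω i)‖) + 1
      linarith
    exact h1.trans (mul_le_mul_of_nonneg_right h2 (norm_nonneg _))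
  have hν0 : ∀ j, ∀ y ∈ 𝔄, ν j y = 0 := by
    intro j y hy
    have hVvy : Vv y = 0 := by
      apply Subtype.ext
      simp only [ZeroMemClass.coe_zero]
      exact hv0 y hy
    show cV.coord j (Vv y) = 0
    rw [hVvy, map_zero]
  have hνbound : ∀ j x, |ν j x| ≤ Lν * Metric.infDist x (𝔄 : Set (Fin n → ℝ)) := by
    intro j x
    have h𝔄ne : (𝔄 : Set (Fin n → ℝ)).Nonempty := ⟨0, Submodule.zero_mem _⟩
    have hall : ∀ y ∈ (𝔄 : Set (Fin n → ℝ)), |ν j x| ≤ Lν * dist x y := by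
      intro y hy
      have heq : ν j x = ν j (x - y) := by rw [map_sub, hν0 j y hy, sub_zero]
      have h1 : |ν j (x - y)| ≤ ‖LinearMap.toContinuousLinearMap (ν j)‖ * ‖x - y‖ := by
        have := (LinearMap.toContinuousLinearMap (ν j)).le_opNorm (x - y)
        simpa [Real.norm_eq_abs] using this
      have h2 : ‖LinearMap.toContinuousLinearMap (ν j)‖ ≤ Lν := by
        have := Finset.single_le_sum
          (f := fun j => ‖LinearMap.toContinuousLinearMap (ν j)‖)
          (fun j _ => norm_nonneg _) (Finset.mem_univ j)
        show _ ≤ (∑ j, ‖LinearMap.toContinuousLinearMap (ν j)‖) + 1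
        linarith
      rw [heq, dist_eq_norm]
      exact h1.trans (mul_le_mul_of_nonneg_right h2 (norm_nonneg _))
    by_contra hcon
    push_neg at hcon
    have hlt : Metric.infDist x (𝔄 : Set (Fin n → ℝ)) < |ν j x| / Lν := by
      rw [lt_div_iff₀ hLνpos]
      nlinarith
    obtain ⟨y, hy, hdy⟩ := (Metric.infDist_lt_iff h𝔄ne).mp hlt
    have := hall y hy
    rw [lt_div_iff₀ hLνpos] at hdy
    nlinarith
  -- basis norm constant
  let C₁ : ℝ := (∑ i, ‖(cW i : Fin n → ℝ)‖) + (∑ j, ‖(cV j : Fin n → ℝ)‖) + 1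
  have hC₁pos : 0 < C₁ := by
    have h1 : (0:ℝ) ≤ ∑ i, ‖(cW i : Fin n → ℝ)‖ := Finset.sum_nonneg fun i _ => norm_nonneg _
    have h2 : (0:ℝ) ≤ ∑ j, ‖(cV j : Fin n → ℝ)‖ := Finset.sum_nonneg fun j _ => norm_nonneg _
    show (0:ℝ) < (∑ i, ‖(cW i : Fin n → ℝ)‖) + (∑ j, ‖(cV j : Fin n → ℝ)‖) + 1
    linarith
  have hCW : ∀ i, ‖(cW i : Fin n → ℝ)‖ ≤ C₁ := by
    intro i
    have h1 := Finset.single_le_sum (f := fun i => ‖(cW i : Fin n → ℝ)‖)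
      (fun j _ => norm_nonneg _) (Finset.mem_univ i)
    have h2 : (0:ℝ) ≤ ∑ j, ‖(cV j : Fin n → ℝ)‖ := Finset.sum_nonneg fun j _ => norm_nonneg _
    show _ ≤ (∑ i, ‖(cW i : Fin n → ℝ)‖) + (∑ j, ‖(cV j : Fin n → ℝ)‖) + 1
    linarith
  have hCV : ∀ j, ‖(cV j : Fin n → ℝ)‖ ≤ C₁ := by
    intro j
    have h1 := Finset.single_le_sum (f := fun j => ‖(cV j : Fin n → ℝ)‖)
      (fun i _ => norm_nonneg _) (Finset.mem_univ j)
    have h2 : (0:ℝ) ≤ ∑ i, ‖(cW i : Fin n → ℝ)‖ := Finset.sum_nonneg fun i _ => norm_nonneg _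
    show _ ≤ (∑ i, ‖(cW i : Fin n → ℝ)‖) + (∑ j, ‖(cV j : Fin n → ℝ)‖) + 1
    linarith
  have hwnorm : ∀ z, ‖wmap z‖ ≤ ∑ i, |ω i z| * C₁ := by
    intro z
    have hrepr : wmap z = ∑ i, ω i z • (cW i : Fin n → ℝ) := by
      have h1 : Wv z = ∑ i, cW.repr (Wv z) i • cW i := (cW.sum_repr (Wv z)).symm
      have h2 : wmap z = ((Wv z : W) : Fin n → ℝ) := rfl
      rw [h2, h1]
      rw [Submodule.coe_sum]
      apply Finset.sum_congr rfl
      intro i _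
      rw [Submodule.coe_smul]
      rfl
    rw [hrepr]
    refine (norm_sum_le _ _).trans ?_
    apply Finset.sum_le_sum
    intro i _
    rw [norm_smul, Real.norm_eq_abs]
    exact mul_le_mul_of_nonneg_left (hCW i) (abs_nonneg _)
  have hvnorm : ∀ z, ‖vmap z‖ ≤ ∑ j, |ν j z| * C₁ := by
    intro z
    have hrepr : vmap z = ∑ j, ν j z • (cV j : Fin n → ℝ) := by
      have h1 : Vv z = ∑ j, cV.repr (Vv z) j • cV j := (cV.sum_repr (Vv z)).symm
      have h2 : vmap z = ((Vv z : V) : Fin n → ℝ) := rfl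
      rw [h2, h1]
      rw [Submodule.coe_sum]
      apply Finset.sum_congr rfl
      intro j _
      rw [Submodule.coe_smul]
      rfl
    rw [hrepr]
    refine (norm_sum_le _ _).trans ?_
    apply Finset.sum_le_sum
    intro j _
    rw [norm_smul, Real.norm_eq_abs]
    exact mul_le_mul_of_nonneg_left (hCV j) (abs_nonneg _)
  refine ⟨Module.finrank ℝ W, Module.finrank ℝ V, ω, ν, Lω, Lν, C₁,
    hkW, hLωpos, hLνpos, hC₁pos, hLω, hνbound, ?_⟩
  intro z
  calc Metric.infDist z (𝔅 : Set (Fin n → ℝ)) ≤ dist z (bmap z) :=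
        Metric.infDist_le_dist_of_mem (hbmem z)
    _ = ‖z - bmap z‖ := dist_eq_norm _ _
    _ = ‖wmap z + vmap z‖ := by rw [hdecomp z]
    _ ≤ ‖wmap z‖ + ‖vmap z‖ := norm_add_le _ _
    _ ≤ (∑ i, |ω i z| * C₁) + (∑ j, |ν j z| * C₁) := add_le_add (hwnorm z) (hvnorm z)
    _ = C₁ * ((∑ i, |ω i z|) + (∑ j, |ν j z|)) := by
        rw [← Finset.sum_mul, ← Finset.sum_mul]
        ring


set_option maxHeartbeats 1600000 in
theorem integer_points_in_pi_bound
    (d a b : ℕ) (hd : 1 ≤ d) (R : ℝ) (hR : 1 ≤ R)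
    (ψ φ : ℝ → ℝ)
    (hψpos : ∀ T, 1 ≤ T → 0 < ψ T) (hφpos : ∀ T, 1 ≤ T → 0 < φ T)
    (hψanti : ∀ T₁ T₂, 1 ≤ T₁ → T₁ ≤ T₂ → ψ T₂ ≤ ψ T₁)
    (hφanti : ∀ T₁ T₂, 1 ≤ T₁ → T₁ ≤ T₂ → φ T₂ ≤ φ T₁)
    (hφψ : ∀ T, 1 ≤ T → φ T ≤ ψ T)
    (hψ0 : Filter.Tendsto ψ Filter.atTop (nhds 0))
    (A B : AffineSubspace ℝ (Fin d → ℝ)) (hBA : B ≤ A)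
    (hBne : (B : Set (Fin d → ℝ)).Nonempty)
    (hb : Module.finrank ℝ B.direction = b)
    (ha : Module.finrank ℝ A.direction = a)
    (hba : b < a) (had : a ≤ d)
    -- `B` is `ψ`-badly approximable:
    (hBbad : ∃ γ > (0:ℝ), ∀ x : Fin (d+1) → ℤ, x ≠ 0 →
      γ * ψ ‖(fun i => (x i : ℝ))‖ ≤
        Metric.infDist (fun i => (x i : ℝ)) (spanLift B : Set (Fin (d+1) → ℝ))) :
    ∃ C > (0:ℝ), ∀ T : ℝ, 1 ≤ T →
      {x : Fin (d+1) → ℤ | (fun i => (x i : ℝ)) ∈ PiSet A φ R T}.Finite ∧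
      (Nat.card {x : Fin (d+1) → ℤ | (fun i => (x i : ℝ)) ∈ PiSet A φ R T} : ℝ)
        ≤ C * (T / ψ (R * T)) ^ (a - b) := by
  classical
  obtain ⟨γ, hγ, hbad⟩ := hBbad
  obtain ⟨p, hp⟩ := hBne
  have hpA : p ∈ A := hBA hp
  have hBA' : spanLift B ≤ spanLift A :=
    Submodule.span_mono (Set.image_mono fun x hx => hBA hx)
  have hrk𝔅 : Module.finrank ℝ (spanLift B) = b + 1 := finrank_spanLift B hp hb
  have hrk𝔄 : Module.finrank ℝ (spanLift A) = a + 1 := finrank_spanLift A hpA ha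
  obtain ⟨k, l, ω, ν, Lω, Lν, C₁, hkrk, hLωpos, hLνpos, hC₁pos, hLω, hνb, hdistB⟩ :=
    exists_functionals (d+1) (spanLift B) (spanLift A) hBA'
  have hk : k = a - b := by rw [hrk𝔅, hrk𝔄] at hkrk; omega
  set D : ℝ := 2 * C₁ * ((k:ℝ) + (l:ℝ) + 1) with hDdef
  have hDpos : 0 < D := by
    rw [hDdef]; positivity
  set N₂ : ℤ := ⌈Lν * D / γ⌉ with hN₂def
  have hN₂nn : 0 ≤ N₂ :=
    Int.ceil_nonneg (div_nonneg (mul_nonneg hLνpos.le hDpos.le) hγ.le)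
  have hψ1 : 0 < ψ 1 := hψpos 1 le_rfl
  set c₂ : ℝ := 2 * Lω * R * D / γ + 4 * ψ 1 + 1 with hc₂def
  have hc₂pos : 0 < c₂ := by
    have h1 : 0 ≤ 2 * Lω * R * D / γ :=
      div_nonneg (by positivity) hγ.le
    rw [hc₂def]; nlinarith
  have hCpos : (0:ℝ) < 2^d * c₂^(a-b) * (2*(N₂:ℝ)+2)^l := by
    have h2 : (0:ℝ) < 2*(N₂:ℝ)+2 := by
      have : (0:ℝ) ≤ (N₂:ℝ) := by exact_mod_cast hN₂nn
      linarith
    positivity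
  refine ⟨2^d * c₂^(a-b) * (2*(N₂:ℝ)+2)^l, hCpos, fun T hT => ?_⟩
  have hRT1 : (1:ℝ) ≤ R * T := by nlinarith
  have hψRT : 0 < ψ (R*T) := hψpos _ hRT1
  have hψle1 : ψ (R*T) ≤ ψ 1 := hψanti 1 (R*T) le_rfl hRT1
  set ε : ℝ := γ * ψ (R*T) / D with hεdef
  have hεpos : 0 < ε := div_pos (mul_pos hγ hψRT) hDpos
  set N₁ : ℤ := ⌈Lω * (R*T) / ε⌉ with hN₁def
  have hN₁nn : 0 ≤ N₁ :=
    Int.ceil_nonneg (div_nonneg (mul_nonneg hLωpos.le (by linarith)) hεpos.le)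
  -- generic floor membership
  have hfloor_mem : ∀ (q bnd : ℝ) (N : ℤ), |q| ≤ bnd → ⌈bnd / ε⌉ ≤ N →
      ⌊q / ε⌋ ∈ Finset.Icc (-N-1) N := by
    intro q bnd N hq hN
    rw [Finset.mem_Icc]
    have habs := abs_le.mp hq
    have hup : q / ε ≤ bnd / ε := by
      gcongr
      exact habs.2
    have hlo : -(bnd / ε) ≤ q / ε := by
      rw [← neg_div]
      gcongr
      exact habs.1
    constructor
    · rw [Int.le_floor]
      have h1 : bnd / ε ≤ (N:ℝ) :=
        le_trans (Int.le_ceil _) (by exact_mod_cast hN)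
      push_cast
      linarith
    · exact le_trans (Int.floor_le_ceil _) (le_trans (Int.ceil_le_ceil hup) hN)
  set S := {x : Fin (d+1) → ℤ | (fun i => (x i : ℝ)) ∈ PiSet A φ R T} with hSdef
  set F : (Fin (d+1) → ℤ) → (Fin d → Bool) × (Fin k → ℤ) × (Fin l → ℤ) :=
    fun x => (fun j => decide (0 ≤ x j.succ),
              fun i => ⌊ω i (fun i' => (x i' : ℝ)) / ε⌋,
              fun j => ⌊ν j (fun i' => (x i' : ℝ)) / ε⌋) with hFdef
  set t : Finset ((Fin d → Bool) × (Fin k → ℤ) × (Fin l → ℤ)) :=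
    Finset.univ ×ˢ ((Fintype.piFinset fun _ : Fin k => Finset.Icc (-N₁-1) N₁) ×ˢ
      (Fintype.piFinset fun _ : Fin l => Finset.Icc (-N₂-1) N₂)) with htdef
  -- norm bound for members
  have hmemnorm : ∀ x : Fin (d+1) → ℤ, x ∈ S → ‖(fun i => (x i : ℝ))‖ ≤ R * T := by
    intro x hx
    obtain ⟨h0, h1, h2, h3⟩ := hx
    rw [pi_norm_le_iff_of_nonneg (by linarith)]
    intro i
    refine Fin.cases ?_ (fun j => ?_) i
    · rw [Real.norm_eq_abs, abs_le]
      refine ⟨by linarith, by nlinarith⟩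
    · rw [Real.norm_eq_abs]
      exact h2 j
  have himg : ∀ x ∈ S, F x ∈ t := by
    intro x hx
    have hxn := hmemnorm x hx
    obtain ⟨h0, h1, h2, h3⟩ := hx
    rw [htdef, Finset.mem_product]
    refine ⟨Finset.mem_univ _, ?_⟩
    rw [Finset.mem_product]
    constructor
    · rw [Fintype.mem_piFinset]
      intro i
      refine hfloor_mem _ (Lω * (R*T)) N₁ ?_ (le_of_eq hN₁def.symm)
      calc |ω i (fun i' => (x i' : ℝ))| ≤ Lω * ‖(fun i' => (x i' : ℝ))‖ := hLω _ _
        _ ≤ Lω * (R*T) := mul_le_mul_of_nonneg_left hxn hLωpos.le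
    · rw [Fintype.mem_piFinset]
      intro j
      have hbndeq : Lν * ψ (R*T) / ε = Lν * D / γ := by
        rw [hεdef]
        field_simp
      refine hfloor_mem _ (Lν * ψ (R*T)) N₂ ?_ (le_of_eq (by rw [hbndeq, hN₂def]))
      calc |ν j (fun i' => (x i' : ℝ))|
          ≤ Lν * Metric.infDist (fun i' => (x i' : ℝ)) (spanLift A : Set (Fin (d+1) → ℝ)) :=
            hνb _ _
        _ ≤ Lν * φ (R*T) := mul_le_mul_of_nonneg_left h3 hLνpos.le
        _ ≤ Lν * ψ (R*T) := mul_le_mul_of_nonneg_left (hφψ _ hRT1) hLνpos.le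
  have hinj : Set.InjOn F S := by
    intro x hx y hy hxy
    by_contra hne
    have hzne : x - y ≠ 0 := sub_ne_zero.mpr hne
    have hcast : (fun i => (((x - y) i : ℤ) : ℝ))
        = (fun i => (x i : ℝ)) - (fun i => (y i : ℝ)) := by
      funext i
      simp only [Pi.sub_apply]
      push_cast
      ring
    obtain ⟨hx0, hx1, hx2, hx3⟩ := hx
    obtain ⟨hy0, hy1, hy2, hy3⟩ := hy
    have hsgn : ∀ j : Fin d, (decide (0 ≤ x j.succ) : Bool) = decide (0 ≤ y j.succ) :=
      fun j => congrFun (congrArg Prod.fst hxy) j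
    have hflω : ∀ i, ⌊ω i (fun i' => (x i' : ℝ)) / ε⌋ = ⌊ω i (fun i' => (y i' : ℝ)) / ε⌋ :=
      fun i => congrFun (congrArg (fun q => q.2.1) hxy) i
    have hflν : ∀ j, ⌊ν j (fun i' => (x i' : ℝ)) / ε⌋ = ⌊ν j (fun i' => (y i' : ℝ)) / ε⌋ :=
      fun j => congrFun (congrArg (fun q => q.2.2) hxy) j
    set zr : Fin (d+1) → ℝ := (fun i => (x i : ℝ)) - (fun i => (y i : ℝ)) with hzrdef
    have hnz : ‖zr‖ ≤ R * T := by
      rw [pi_norm_le_iff_of_nonneg (by linarith)]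
      intro i
      refine Fin.cases ?_ (fun j => ?_) i
      · simp only [hzrdef, Pi.sub_apply, Real.norm_eq_abs]
        rw [abs_le]
        constructor <;> nlinarith
      · have hsj := decide_eq_decide.mp (hsgn j)
        have hxj := abs_le.mp (hx2 j)
        have hyj := abs_le.mp (hy2 j)
        simp only [hzrdef, Pi.sub_apply, Real.norm_eq_abs]
        by_cases hposx : 0 ≤ x j.succ
        · have hposy : 0 ≤ y j.succ := hsj.mp hposx
          have hx' : (0:ℝ) ≤ (x j.succ : ℝ) := by exact_mod_cast hposx
          have hy' : (0:ℝ) ≤ (y j.succ : ℝ) := by exact_mod_cast hposy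
          rw [abs_le]
          constructor <;> nlinarith
        · have hposy : ¬ 0 ≤ y j.succ := fun h => hposx (hsj.mpr h)
          push_neg at hposx hposy
          have hx' : (x j.succ : ℝ) < 0 := by exact_mod_cast hposx
          have hy' : (y j.succ : ℝ) < 0 := by exact_mod_cast hposy
          rw [abs_le]
          constructor <;> nlinarith
    have hz1 : 1 ≤ ‖zr‖ := by
      obtain ⟨i, hi⟩ := Function.ne_iff.mp hne
      have h1 : x i - y i ≠ 0 := sub_ne_zero.mpr hi
      have h2 : (1:ℤ) ≤ |x i - y i| := Int.one_le_abs h1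
      have h3 : (1:ℝ) ≤ |(x i : ℝ) - (y i : ℝ)| := by exact_mod_cast h2
      calc (1:ℝ) ≤ |(x i : ℝ) - (y i : ℝ)| := h3
        _ = ‖zr i‖ := by simp [hzrdef, Real.norm_eq_abs]
        _ ≤ ‖zr‖ := norm_le_pi_norm zr i
    have hωsmall : ∀ i, |ω i zr| ≤ ε := by
      intro i
      have h := abs_sub_lt_of_floor_eq hεpos (hflω i)
      rw [hzrdef, map_sub]
      exact h.le
    have hνsmall : ∀ j, |ν j zr| ≤ ε := by
      intro j
      have h := abs_sub_lt_of_floor_eq hεpos (hflν j)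
      rw [hzrdef, map_sub]
      exact h.le
    have hsum1 : (∑ i, |ω i zr|) ≤ (k:ℝ) * ε := by
      calc (∑ i, |ω i zr|) ≤ Finset.univ.card • ε :=
            Finset.sum_le_card_nsmul _ _ _ (fun i _ => hωsmall i)
        _ = (k:ℝ) * ε := by simp [nsmul_eq_mul]
    have hsum2 : (∑ j, |ν j zr|) ≤ (l:ℝ) * ε := by
      calc (∑ j, |ν j zr|) ≤ Finset.univ.card • ε :=
            Finset.sum_le_card_nsmul _ _ _ (fun j _ => hνsmall j)
        _ = (l:ℝ) * ε := by simp [nsmul_eq_mul]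
    have hd1 : Metric.infDist zr (spanLift B : Set (Fin (d+1) → ℝ))
        ≤ C₁ * ((k:ℝ)*ε + (l:ℝ)*ε) := by
      refine le_trans (hdistB zr) ?_
      have := add_le_add hsum1 hsum2
      nlinarith
    have hkey : C₁ * ((k:ℝ)*ε + (l:ℝ)*ε) < γ * ψ (R*T) := by
      have hεD : ε * D = γ * ψ (R*T) := by
        rw [hεdef]
        field_simp
      rw [← hεD, hDdef]
      nlinarith
    have hbadz := hbad (x - y) hzne
    rw [hcast] at hbadz
    have hψmono : ψ (R*T) ≤ ψ ‖zr‖ := hψanti ‖zr‖ (R*T) hz1 hnz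
    have hmul : γ * ψ (R*T) ≤ γ * ψ ‖zr‖ := mul_le_mul_of_nonneg_left hψmono hγ.le
    linarith
  have himgsub : F '' S ⊆ ↑t := by
    rintro _ ⟨x, hx, rfl⟩
    exact himg x hx
  have hfin : S.Finite := Set.Finite.of_finite_image (t.finite_toSet.subset himgsub) hinj
  refine ⟨hfin, ?_⟩
  have hncard : (Nat.card S : ℝ) ≤ (t.card : ℝ) := by
    have h1 : S.ncard ≤ t.card := by
      rw [← Set.ncard_coe_finset t, ← Set.ncard_image_of_injOn hinj]
      exact Set.ncard_le_ncard himgsub t.finite_toSet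
    rw [Nat.card_coe_set_eq]
    exact_mod_cast h1
  have hIcc1 : ((Finset.Icc (-N₁-1) N₁).card : ℝ) = 2*(N₁:ℝ)+2 := by
    rw [Int.card_Icc]
    have hz : ((N₁ + 1 - (-N₁-1)).toNat : ℤ) = 2*N₁+2 := by
      rw [Int.toNat_of_nonneg (by omega)]
      ring
    have : ((N₁ + 1 - (-N₁-1)).toNat : ℝ) = ((2*N₁+2 : ℤ) : ℝ) := by exact_mod_cast hz
    rw [this]
    push_cast
    ring
  have hIcc2 : ((Finset.Icc (-N₂-1) N₂).card : ℝ) = 2*(N₂:ℝ)+2 := by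
    rw [Int.card_Icc]
    have hz : ((N₂ + 1 - (-N₂-1)).toNat : ℤ) = 2*N₂+2 := by
      rw [Int.toNat_of_nonneg (by omega)]
      ring
    have : ((N₂ + 1 - (-N₂-1)).toNat : ℝ) = ((2*N₂+2 : ℤ) : ℝ) := by exact_mod_cast hz
    rw [this]
    push_cast
    ring
  have htcard : (t.card : ℝ) = 2^d * (2*(N₁:ℝ)+2)^k * (2*(N₂:ℝ)+2)^l := by
    have hcard' : t.card = 2^d * ((Finset.Icc (-N₁-1) N₁).card)^k
        * ((Finset.Icc (-N₂-1) N₂).card)^l := by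
      rw [htdef, Finset.card_product, Finset.card_product,
        Fintype.card_piFinset, Fintype.card_piFinset,
        Finset.prod_const, Finset.prod_const]
      simp only [Finset.card_univ, Fintype.card_fin, Fintype.card_fun,
        Fintype.card_bool]
      ring
    rw [hcard']
    push_cast
    rw [hIcc1, hIcc2]
  -- bound 2N₁+2 by c₂ * (T/ψ(RT))
  have hu0 : 1/ψ 1 ≤ T / ψ (R*T) :=
    div_le_div₀ (by linarith) hT hψRT hψle1
  have hupos : 0 < T / ψ (R*T) := div_pos (by linarith) hψRT
  have hN1bnd : 2*(N₁:ℝ)+2 ≤ c₂ * (T / ψ (R*T)) := by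
    have hceil : (N₁:ℝ) < Lω * (R*T) / ε + 1 := by
      rw [hN₁def]
      exact Int.ceil_lt_add_one _
    have heq : Lω * (R*T) / ε = (Lω * R * D / γ) * (T / ψ (R*T)) := by
      rw [hεdef]
      field_simp
    have hψinv : ψ 1 * (1/ψ 1) = 1 := by field_simp
    have h4 : 4 * ψ 1 * (T / ψ (R*T)) ≥ 4 := by nlinarith
    have hLRD : 0 ≤ Lω * R * D / γ := div_nonneg (by positivity) hγ.le
    have hN1' : (N₁:ℝ) < (Lω * R * D / γ) * (T / ψ (R*T)) + 1 := by
      rw [← heq]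
      exact hceil
    rw [hc₂def]
    have hexp : (2 * Lω * R * D / γ + 4 * ψ 1 + 1) * (T / ψ (R*T))
        = 2 * ((Lω * R * D / γ) * (T / ψ (R*T))) + 4 * ψ 1 * (T / ψ (R*T))
          + (T / ψ (R*T)) := by ring
    rw [hexp]
    linarith [h4, hupos, hN1']
  calc (Nat.card S : ℝ) ≤ (t.card : ℝ) := hncard
    _ = 2^d * (2*(N₁:ℝ)+2)^k * (2*(N₂:ℝ)+2)^l := htcard
    _ ≤ 2^d * (c₂ * (T / ψ (R*T)))^k * (2*(N₂:ℝ)+2)^l := by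
        have hbase : (0:ℝ) ≤ 2*(N₁:ℝ)+2 := by
          have : (0:ℝ) ≤ (N₁:ℝ) := by exact_mod_cast hN₁nn
          linarith
        have hb2 : (0:ℝ) ≤ 2*(N₂:ℝ)+2 := by
          have : (0:ℝ) ≤ (N₂:ℝ) := by exact_mod_cast hN₂nn
          linarith
        have hpow := pow_le_pow_left₀ hbase hN1bnd k
        have h2d : (0:ℝ) ≤ (2:ℝ)^d := by positivity
        have h2l : (0:ℝ) ≤ (2*(N₂:ℝ)+2)^l := pow_nonneg hb2 l
        exact mul_le_mul_of_nonneg_right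
          (mul_le_mul_of_nonneg_left hpow h2d) h2l
    _ = 2^d * c₂^(a-b) * (2*(N₂:ℝ)+2)^l * (T / ψ (R*T)) ^ (a-b) := by
        rw [← hk, mul_pow]
        ring
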